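/- Suppose ρ₀ is a Γ-admissible metric in a domain D and there is a subfamily Γ₀ ⊆ Γ such that (i) ∫_γ ρ₀ ds = 1 for all γ ∈ Γ₀, and (ii) for every real-valued measurable h on D with ∫_γ h ds ≥ 0 for all γ ∈ Γ₀, one has ∬_D h ρ₀ dx dy ≥ 0. Then ρ₀ is extremal for Γ, i.e., mod(Γ) = ∬_D ρ₀² dx dy. -/

import Mathlib

open MeasureTheory Set Filter Topology
open scoped ENNReal NNReal

/-- The line integral of a density `ρ` along a curve `γ` parametrized on `[0,1]`. -/
noncomputable def curveIntegralρ (ρ : ℂ → ℝ) (γ : ℝ → ℂ) : ℝ :=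
  ∫ t in (0:ℝ)..1, ρ (γ t) * ‖deriv γ t‖

/-- `ρ` is an admissible metric for the curve family `Γ`. -/
def IsAdmissible (Γ : Set (ℝ → ℂ)) (ρ : ℂ → ℝ) : Prop :=
  Measurable ρ ∧ (∀ z, 0 ≤ ρ z) ∧ ∀ γ ∈ Γ, 1 ≤ curveIntegralρ ρ γ

/-- The conformal modulus of a family of curves in `ℂ`. -/
noncomputable def modulus (Γ : Set (ℝ → ℂ)) : ℝ≥0∞ :=
  ⨅ (ρ : ℂ → ℝ) (_ : IsAdmissible Γ ρ), ∫⁻ z : ℂ, ENNReal.ofReal (ρ z ^ 2)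

/-- A curve lies in the set `D`. -/
def IsCurveIn (D : Set ℂ) (γ : ℝ → ℂ) : Prop :=
  ∀ t ∈ Icc (0:ℝ) 1, γ t ∈ D

/-- The length of the projection of a curve to the x-axis. -/
noncomputable def horizVar (γ : ℝ → ℂ) : ℝ :=
  Metric.diam ((fun t => (γ t).re) '' Icc (0:ℝ) 1)

/-- `γ` is (a parametrization of) a vertical segment of positive length. -/
def IsVerticalSegment (γ : ℝ → ℂ) : Prop :=
  ∃ x y₁ y₂ : ℝ, y₁ < y₂ ∧ ∀ t, γ t = ⟨x, y₁ + t * (y₂ - y₁)⟩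

/-- The vertical compression `T_ε(x,y) = (x, εy)` acting on curves. -/
def stretch (ε : ℝ) (γ : ℝ → ℂ) : ℝ → ℂ :=
  fun t => ⟨(γ t).re, ε * (γ t).im⟩

/-- `γ₂` is a subcurve of `γ₁`. -/
def IsSubcurve (γ₂ γ₁ : ℝ → ℂ) : Prop :=
  ∃ a b : ℝ, 0 ≤ a ∧ a ≤ b ∧ b ≤ 1 ∧ ∀ t, γ₂ t = γ₁ (a + t * (b - a))

/-- The graph domain (hypograph) of `f : (A,B) → (0,∞]`, as a subset of `ℂ`. -/
def hypograph (A B : ℝ) (f : ℝ → ℝ≥0∞) : Set ℂ :=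
  {z : ℂ | z.re ∈ Ioo A B ∧ 0 < z.im ∧ ENNReal.ofReal z.im < f z.re}

/-- `z` lies on the graph of `f` over `(A,B)`. -/
def onGraph (A B : ℝ) (f : ℝ → ℝ≥0∞) (z : ℂ) : Prop :=
  z.re ∈ Ioo A B ∧ 0 < z.im ∧ ENNReal.ofReal z.im = f z.re

/-- Curves in the hypograph of `f` joining the bottom side over `S` to the graph of `f` over `T`. -/
def connectFamilyGraph (A B : ℝ) (f : ℝ → ℝ≥0∞) (S T : Set ℝ) : Set (ℝ → ℂ) :=
  {γ | (∀ t ∈ Ioo (0:ℝ) 1, γ t ∈ hypograph A B f) ∧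
       (γ 0).im = 0 ∧ (γ 0).re ∈ S ∧
       onGraph A B f (γ 1) ∧ (γ 1).re ∈ T}

lemma curve_step_aux {Γ Γ₀ : Set (ℝ → ℂ)} (hΓ₀ : Γ₀ ⊆ Γ) {ρ ρ₀ : ℂ → ℝ}
    (hρadm : IsAdmissible Γ ρ) (hone : ∀ γ ∈ Γ₀, curveIntegralρ ρ₀ γ = 1)
    (s : ℂ → ℝ) (hs1 : ∀ z, s z ≤ ρ₀ z)
    {γ : ℝ → ℂ} (hγ : γ ∈ Γ₀) : 0 ≤ curveIntegralρ (fun z => ρ z - s z) γ := by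
  have h1 : (1:ℝ) ≤ ∫ t in (0:ℝ)..1, ρ (γ t) * ‖deriv γ t‖ := hρadm.2.2 γ (hΓ₀ hγ)
  have h0 : (∫ t in (0:ℝ)..1, ρ₀ (γ t) * ‖deriv γ t‖) = 1 := hone γ hγ
  have hF : IntervalIntegrable (fun t => ρ (γ t) * ‖deriv γ t‖) volume 0 1 := by
    by_contra hc
    rw [intervalIntegral.integral_undef hc] at h1; linarith
  have hF0 : IntervalIntegrable (fun t => ρ₀ (γ t) * ‖deriv γ t‖) volume 0 1 := by
    by_contra hc
    rw [intervalIntegral.integral_undef hc] at h0; linarith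
  simp only [curveIntegralρ, sub_mul]
  by_cases hFG : IntervalIntegrable
      (fun t => ρ (γ t) * ‖deriv γ t‖ - s (γ t) * ‖deriv γ t‖) volume 0 1
  · have hG : IntervalIntegrable (fun t => s (γ t) * ‖deriv γ t‖) volume 0 1 := by
      have h := hF.sub hFG
      have heq : (fun t => ρ (γ t) * ‖deriv γ t‖ -
          (ρ (γ t) * ‖deriv γ t‖ - s (γ t) * ‖deriv γ t‖))
          = fun t => s (γ t) * ‖deriv γ t‖ := by funext t; ring
      rwa [heq] at h
    have hGle : (∫ t in (0:ℝ)..1, s (γ t) * ‖deriv γ t‖) ≤ 1 := by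
      refine le_trans (intervalIntegral.integral_mono_on (by norm_num) hG hF0
        (fun t _ => mul_le_mul_of_nonneg_right (hs1 _) (norm_nonneg _))) (le_of_eq h0)
    rw [intervalIntegral.integral_sub hF hG]
    linarith
  · rw [intervalIntegral.integral_undef hFG]

lemma ofReal_sq_rpow {x : ℝ} (hx : 0 ≤ x) :
    ENNReal.ofReal x ^ (2:ℝ) = ENNReal.ofReal (x ^ 2) := by
  rw [ENNReal.ofReal_rpow_of_nonneg hx (by norm_num), show (2:ℝ) = ((2:ℕ):ℝ) by norm_num,
    Real.rpow_natCast]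

/-- key inequality -/
lemma beurling_key (D : Set ℂ) (Γ Γ₀ : Set (ℝ → ℂ)) (hΓ₀ : Γ₀ ⊆ Γ)
    (ρ₀ : ℂ → ℝ) (hadm : IsAdmissible Γ ρ₀) (hsupp : ∀ z ∉ D, ρ₀ z = 0)
    (hone : ∀ γ ∈ Γ₀, curveIntegralρ ρ₀ γ = 1)
    (hpos : ∀ h : ℂ → ℝ, Measurable h →
      (∀ γ ∈ Γ₀, 0 ≤ curveIntegralρ h γ) → 0 ≤ ∫ z in D, h z * ρ₀ z)
    (ρ : ℂ → ℝ) (hρ : IsAdmissible Γ ρ) :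
    (∫⁻ z : ℂ, ENNReal.ofReal (ρ₀ z ^ 2)) ≤ ∫⁻ z : ℂ, ENNReal.ofReal (ρ z ^ 2) := by
  classical
  have hρm : Measurable ρ := hρ.1
  have hρ0 : ∀ z, 0 ≤ ρ z := hρ.2.1
  have hρ₀m : Measurable ρ₀ := hadm.1
  have hρ₀0 : ∀ z, 0 ≤ ρ₀ z := hadm.2.1
  by_cases hK : (∫⁻ z : ℂ, ENNReal.ofReal (ρ z ^ 2)) = ⊤
  · rw [hK]; exact le_top
  set K2 := ∫⁻ z : ℂ, ENNReal.ofReal (ρ z ^ 2) with hK2def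
  -- ρ² is integrable
  have hρ2int : Integrable (fun z => ρ z ^ 2) (volume : Measure ℂ) := by
    refine ⟨(hρm.pow_const 2).aestronglyMeasurable, ?_⟩
    rw [hasFiniteIntegral_iff_ofReal (Eventually.of_forall fun z => sq_nonneg _)]
    exact lt_top_iff_ne_top.mpr hK
  -- exhausting sets
  set E : ℕ → Set ℂ := fun n => {z | ρ₀ z ≤ n} ∩ Metric.closedBall 0 n with hEdef
  have hEmeas : ∀ n, MeasurableSet (E n) := fun n =>
    (measurableSet_le hρ₀m measurable_const).inter measurableSet_closedBall
  have hEfin : ∀ n, volume (E n) < ⊤ := fun n =>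
    lt_of_le_of_lt (measure_mono inter_subset_right) measure_closedBall_lt_top
  have hEmono : Monotone E := by
    intro m n hmn
    have hc : (m:ℝ) ≤ n := Nat.cast_le.mpr hmn
    exact inter_subset_inter (fun z hz => le_trans hz hc)
      (Metric.closedBall_subset_closedBall hc)
  have hEcover : ∀ z : ℂ, ∃ n, z ∈ E n := by
    intro z
    refine ⟨max ⌈ρ₀ z⌉₊ ⌈‖z‖⌉₊, ?_, ?_⟩
    · exact le_trans (Nat.le_ceil _) ((Nat.cast_le (α := ℝ)).mpr (le_max_left _ _))
    · rw [Metric.mem_closedBall, dist_zero_right]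
      exact le_trans (Nat.le_ceil _) ((Nat.cast_le (α := ℝ)).mpr (le_max_right _ _))
  -- the comparison functions
  set s : ℕ → ℂ → ℝ := fun n => (E n).piecewise ρ₀ (fun z => min (ρ z) (ρ₀ z)) with hsdef
  set P : ℕ → ℂ → ℝ := fun n => (E n).piecewise (fun z => ρ z * ρ₀ z)
      (fun z => (ρ z - min (ρ z) (ρ₀ z)) * ρ₀ z) with hPdef
  set Q : ℕ → ℂ → ℝ := fun n => (E n).indicator (fun z => ρ₀ z ^ 2) with hQdef
  have hsm : ∀ n, Measurable (s n) := fun n =>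
    Measurable.piecewise (hEmeas n) hρ₀m (hρm.min hρ₀m)
  have hs1 : ∀ n z, s n z ≤ ρ₀ z := by
    intro n z
    by_cases h : z ∈ E n
    · simp [hsdef, Set.piecewise, h]
    · simp [hsdef, Set.piecewise, h, min_le_right]
  have hmain : ∀ n, 0 ≤ ∫ z in D, (ρ z - s n z) * ρ₀ z := by
    intro n
    exact hpos _ (hρm.sub (hsm n))
      (fun γ hγ => curve_step_aux hΓ₀ hρ hone (s n) (hs1 n) hγ)

  -- pointwise decomposition h·ρ₀ = P - Q
  have hPQ : ∀ n z, (ρ z - s n z) * ρ₀ z = P n z - Q n z := by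
    intro n z
    by_cases h : z ∈ E n
    · simp only [hsdef, hPdef, hQdef, Set.piecewise, Set.indicator, h, if_true]
      ring
    · simp only [hsdef, hPdef, hQdef, Set.piecewise, Set.indicator, h, if_false]
      ring
  have hQnonneg : ∀ n z, 0 ≤ Q n z := fun n z =>
    Set.indicator_nonneg (fun z _ => sq_nonneg _) z
  have hPnonneg : ∀ n z, 0 ≤ P n z := by
    intro n z
    by_cases h : z ∈ E n
    · simp only [hPdef, Set.piecewise_eq_of_mem _ _ _ h]
      exact mul_nonneg (hρ0 z) (hρ₀0 z)
    · simp only [hPdef, Set.piecewise_eq_of_notMem _ _ _ h]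
      exact mul_nonneg (sub_nonneg.mpr (min_le_left _ _)) (hρ₀0 z)
  -- integrability of Q and P
  have hQint : ∀ n, Integrable (Q n) (volume : Measure ℂ) := by
    intro n
    have hgint : Integrable ((E n).indicator fun _ => (n:ℝ)^2) volume :=
      (integrable_indicator_iff (hEmeas n)).mpr (integrableOn_const (hEfin n).ne)
    refine hgint.mono' ((hρ₀m.pow_const 2).indicator (hEmeas n)).aestronglyMeasurable ?_
    refine Eventually.of_forall fun z => ?_
    by_cases h : z ∈ E n
    · simp only [hQdef, Set.indicator_of_mem h]
      rw [Real.norm_eq_abs, abs_of_nonneg (sq_nonneg _)]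
      exact pow_le_pow_left₀ (hρ₀0 z) h.1 2
    · simp [hQdef, Set.indicator_of_notMem h]
  have hρEint : ∀ n, Integrable ((E n).indicator fun z => (n:ℝ) * ρ z) volume := by
    intro n
    have hgint : Integrable
        (fun z => (E n).indicator (fun _ => (n:ℝ)) z + (n:ℝ) * ρ z ^ 2) volume :=
      ((integrable_indicator_iff (hEmeas n)).mpr (integrableOn_const (hEfin n).ne)).add
        (hρ2int.const_mul _)
    refine hgint.mono' ((measurable_const.mul hρm).indicator (hEmeas n)).aestronglyMeasurable ?_
    refine Eventually.of_forall fun z => ?_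
    by_cases h : z ∈ E n
    · simp only [Set.indicator_of_mem h]
      rw [Real.norm_eq_abs, abs_of_nonneg (mul_nonneg (Nat.cast_nonneg n) (hρ0 z))]
      have hn0 : (0:ℝ) ≤ (n:ℝ) := Nat.cast_nonneg n
      nlinarith [mul_nonneg hn0 (sq_nonneg (ρ z - 1)), mul_nonneg hn0 (hρ0 z)]
    · simp only [Set.indicator_of_notMem h, norm_zero]
      positivity
  have hPint : ∀ n, Integrable (P n) (volume : Measure ℂ) := by
    intro n
    have hgint := (hρEint n).add hρ2int
    refine hgint.mono' (Measurable.piecewise (hEmeas n) (hρm.mul hρ₀m)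
      ((hρm.sub (hρm.min hρ₀m)).mul hρ₀m)).aestronglyMeasurable ?_
    refine Eventually.of_forall fun z => ?_
    by_cases h : z ∈ E n
    · simp only [hPdef, Set.piecewise_eq_of_mem _ _ _ h, Pi.add_apply,
        Set.indicator_of_mem h]
      rw [Real.norm_eq_abs, abs_of_nonneg (mul_nonneg (hρ0 z) (hρ₀0 z))]
      have h1 : ρ₀ z ≤ n := h.1
      nlinarith [mul_le_mul_of_nonneg_left h1 (hρ0 z), sq_nonneg (ρ z)]
    · simp only [hPdef, Set.piecewise_eq_of_notMem _ _ _ h, Pi.add_apply,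
        Set.indicator_of_notMem h, zero_add]
      rw [Real.norm_eq_abs]
      rcases le_total (ρ z) (ρ₀ z) with hle | hle
      · rw [min_eq_left hle, sub_self, zero_mul, abs_zero]
        positivity
      · rw [min_eq_right hle,
          abs_of_nonneg (mul_nonneg (sub_nonneg.mpr hle) (hρ₀0 z))]
        nlinarith [hρ₀0 z, sq_nonneg (2 * ρ z - ρ₀ z), sq_nonneg (ρ z - ρ₀ z)]
  -- hpos gives ∫ Q ≤ ∫ P over D
  have hQP : ∀ n, (∫ z in D, Q n z) ≤ ∫ z in D, P n z := by
    intro n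
    have h0 := hmain n
    have heq : (fun z => (ρ z - s n z) * ρ₀ z) = fun z => P n z - Q n z :=
      funext (hPQ n)
    rw [show (∫ z in D, (ρ z - s n z) * ρ₀ z) = ∫ z in D, (P n z - Q n z) from by
      rw [heq]] at h0
    rw [integral_sub ((hPint n).restrict) ((hQint n).restrict)] at h0
    linarith
  -- move to lintegrals
  set ν : Measure ℂ := volume.restrict D with hνdef
  set g2 : ℂ → ℝ≥0∞ := fun z => ENNReal.ofReal (ρ₀ z ^ 2) with hg2def
  set r2 : ℂ → ℝ≥0∞ := fun z => ENNReal.ofReal (ρ z ^ 2) with hr2def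
  have hg2m : Measurable g2 := (hρ₀m.pow_const 2).ennreal_ofReal
  have hr2m : Measurable r2 := (hρm.pow_const 2).ennreal_ofReal
  set A : ℕ → ℝ≥0∞ := fun n => ∫⁻ z, (E n).indicator g2 z ∂ν with hAdef
  set Bq : ℕ → ℝ≥0∞ := fun n => ∫⁻ z, (E n).indicator r2 z with hBdef
  set eps : ℕ → ℝ≥0∞ := fun n => ∫⁻ z, ((E n)ᶜ).indicator r2 z with hepsdef
  have hlinQP : ∀ n, A n ≤ ∫⁻ z, ENNReal.ofReal (P n z) ∂ν := by
    intro n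
    have e1 : ENNReal.ofReal (∫ z in D, Q n z) = A n := by
      rw [ofReal_integral_eq_lintegral_ofReal ((hQint n).restrict)
        (Eventually.of_forall (hQnonneg n))]
      exact lintegral_congr fun z => by
        by_cases h : z ∈ E n <;> simp [hQdef, hg2def, Set.indicator, h]
    have e2 : ENNReal.ofReal (∫ z in D, P n z) = ∫⁻ z, ENNReal.ofReal (P n z) ∂ν :=
      ofReal_integral_eq_lintegral_ofReal ((hPint n).restrict)
        (Eventually.of_forall (hPnonneg n))
    rw [← e1, ← e2]
    exact ENNReal.ofReal_le_ofReal (hQP n)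
  -- Cauchy–Schwarz step
  have hconj : Real.HolderConjugate 2 2 := Real.HolderConjugate.two_two
  set fρ : ℂ → ℝ≥0∞ := fun z => ENNReal.ofReal (ρ z) with hfρdef
  have hfρm : Measurable fρ := hρm.ennreal_ofReal
  have hCS : ∀ n, A n ≤ K2 ^ (1/2 : ℝ) * A n ^ (1/2 : ℝ) + eps n := by
    intro n
    set gE : ℂ → ℝ≥0∞ := (E n).indicator (fun z => ENNReal.ofReal (ρ₀ z)) with hgEdef
    have hgEm : Measurable gE := hρ₀m.ennreal_ofReal.indicator (hEmeas n)
    have hb : ∀ z, ENNReal.ofReal (P n z) ≤ (fρ * gE) z + ((E n)ᶜ).indicator r2 z := by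
      intro z
      by_cases h : z ∈ E n
      · have heq : ENNReal.ofReal (P n z) = (fρ * gE) z := by
          simp only [hPdef, Set.piecewise_eq_of_mem _ _ _ h, Pi.mul_apply, hfρdef, hgEdef,
            Set.indicator_of_mem h]
          exact ENNReal.ofReal_mul (hρ0 z)
        rw [heq, Set.indicator_of_notMem (by simpa using h)]
        simp
      · have h2 : P n z ≤ ρ z ^ 2 := by
          simp only [hPdef, Set.piecewise_eq_of_notMem _ _ _ h]
          rcases le_total (ρ z) (ρ₀ z) with hle | hle
          · rw [min_eq_left hle]
            simp [sq_nonneg]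
          · rw [min_eq_right hle]
            nlinarith [hρ₀0 z, sq_nonneg (2 * ρ z - ρ₀ z), sq_nonneg (ρ z - ρ₀ z)]
        calc ENNReal.ofReal (P n z) ≤ r2 z := ENNReal.ofReal_le_ofReal h2
        _ = (fρ * gE) z + ((E n)ᶜ).indicator r2 z := by
            rw [Pi.mul_apply, hgEdef, Set.indicator_of_notMem h,
              Set.indicator_of_mem (by simpa using h), mul_zero, zero_add]
    have hCS0 := ENNReal.lintegral_mul_le_Lp_mul_Lq ν hconj hfρm.aemeasurable hgEm.aemeasurable
    have hf2 : (∫⁻ z, fρ z ^ (2:ℝ) ∂ν) ≤ K2 := by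
      have hpt : ∀ z, fρ z ^ (2:ℝ) = r2 z := by
        intro z
        simp only [hfρdef, hr2def]
        exact ofReal_sq_rpow (hρ0 z)
      calc (∫⁻ z, fρ z ^ (2:ℝ) ∂ν) = ∫⁻ z, r2 z ∂ν := lintegral_congr hpt
      _ ≤ ∫⁻ z, r2 z := lintegral_mono' Measure.restrict_le_self le_rfl
      _ = K2 := hK2def.symm
    have hg2e : (∫⁻ z, gE z ^ (2:ℝ) ∂ν) = A n := by
      refine lintegral_congr fun z => ?_
      by_cases h : z ∈ E n
      · rw [hgEdef, Set.indicator_of_mem h, Set.indicator_of_mem h, hg2def]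
        exact ofReal_sq_rpow (hρ₀0 z)
      · rw [hgEdef, Set.indicator_of_notMem h, Set.indicator_of_notMem h,
          ENNReal.zero_rpow_of_pos (by norm_num)]
    calc A n ≤ ∫⁻ z, ENNReal.ofReal (P n z) ∂ν := hlinQP n
    _ ≤ ∫⁻ z, ((fρ * gE) z + ((E n)ᶜ).indicator r2 z) ∂ν := lintegral_mono hb
    _ = (∫⁻ z, (fρ * gE) z ∂ν) + ∫⁻ z, ((E n)ᶜ).indicator r2 z ∂ν :=
        lintegral_add_left (hfρm.mul hgEm) _
    _ ≤ (∫⁻ z, fρ z ^ (2:ℝ) ∂ν) ^ (1/2:ℝ) * (∫⁻ z, gE z ^ (2:ℝ) ∂ν) ^ (1/2:ℝ) + eps n :=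
        add_le_add hCS0 (lintegral_mono' Measure.restrict_le_self le_rfl)
    _ ≤ K2 ^ (1/2:ℝ) * A n ^ (1/2:ℝ) + eps n := by
        rw [hg2e]
        exact add_le_add_left (mul_le_mul_left (ENNReal.rpow_le_rpow hf2 (by norm_num)) _) _
  -- monotone convergence facts
  have hindmono : ∀ (f : ℂ → ℝ≥0∞), Monotone (fun n => (E n).indicator f) := by
    intro f m n hmn
    exact Set.indicator_le_indicator_of_subset (hEmono hmn) (fun z => zero_le)
  have hindsup : ∀ (f : ℂ → ℝ≥0∞) (z : ℂ), (⨆ n, (E n).indicator f z) = f z := by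
    intro f z
    refine le_antisymm (iSup_le fun n => Set.indicator_le_self _ _ z) ?_
    obtain ⟨n, hn⟩ := hEcover z
    calc f z = (E n).indicator f z := (Set.indicator_of_mem hn f).symm
    _ ≤ ⨆ n, (E n).indicator f z := le_iSup (fun n => (E n).indicator f z) n
  have hsupA : (∫⁻ z, g2 z ∂ν) = ⨆ n, A n := by
    simp only [hAdef]
    rw [← lintegral_iSup (fun n => hg2m.indicator (hEmeas n)) (hindmono g2)]
    exact lintegral_congr fun z => (hindsup g2 z).symm
  have hsupB : (⨆ n, Bq n) = K2 := by
    simp only [hBdef, hK2def]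
    rw [← lintegral_iSup (fun n => hr2m.indicator (hEmeas n)) (hindmono r2)]
    exact lintegral_congr fun z => hindsup r2 z
  have hepsleK2 : ∀ n, eps n ≤ K2 := by
    intro n
    rw [hK2def]
    exact lintegral_mono fun z => Set.indicator_le_self _ _ z
  have hepsex : ∀ δ : ℝ≥0∞, δ ≠ 0 → ∃ n, eps n ≤ δ := by
    intro δ hδ
    by_cases hK20 : K2 = 0
    · exact ⟨0, le_trans (hepsleK2 0) (by simp [hK20])⟩
    rcases le_or_gt K2 δ with h | h
    · exact ⟨0, (hepsleK2 0).trans h⟩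
    have h1 : K2 - δ < ⨆ n, Bq n := by
      rw [hsupB]
      exact ENNReal.sub_lt_self hK hK20 hδ
    obtain ⟨n, hn⟩ := lt_iSup_iff.mp h1
    refine ⟨n, ?_⟩
    have hBfin : Bq n ≠ ⊤ := by
      refine ne_top_of_le_ne_top hK ?_
      rw [hK2def]
      exact lintegral_mono fun z => Set.indicator_le_self _ _ z
    have hBe : Bq n + eps n = K2 := by
      rw [hBdef, hepsdef, hK2def, ← lintegral_add_left (hr2m.indicator (hEmeas n))]
      exact lintegral_congr fun z => by
        by_cases h : z ∈ E n <;> simp [Set.indicator, h, hr2def]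
    have h2 : K2 ≤ Bq n + δ := by
      refine le_trans ?_ (add_le_add_left hn.le δ)
      exact le_trans (le_tsub_add) (by rw [add_comm])
    rw [← hBe] at h2
    exact (ENNReal.add_le_add_iff_left hBfin).mp h2
  have hAfin : ∀ n, A n ≠ ⊤ := by
    intro n
    have hν1 : ν (E n) < ⊤ := by
      rw [hνdef, Measure.restrict_apply (hEmeas n)]
      exact lt_of_le_of_lt (measure_mono inter_subset_left) (hEfin n)
    have h1 : A n ≤ ENNReal.ofReal ((n:ℝ)^2) * ν (E n) := by
      simp only [hAdef]
      rw [lintegral_indicator (hEmeas n)]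
      calc (∫⁻ z in E n, g2 z ∂ν) ≤ ∫⁻ _ in E n, ENNReal.ofReal ((n:ℝ)^2) ∂ν :=
          setLIntegral_mono' (hEmeas n) (fun z hz =>
            ENNReal.ofReal_le_ofReal (pow_le_pow_left₀ (hρ₀0 z) hz.1 2))
      _ = ENNReal.ofReal ((n:ℝ)^2) * ν (E n) := setLIntegral_const _ _
    exact ne_top_of_le_ne_top
      (ENNReal.mul_ne_top ENNReal.ofReal_ne_top hν1.ne) h1
  have hAbound : ∀ n, A n ≤ 4 * K2 + 2 * eps n := by
    intro n
    by_cases h4 : A n ≤ 4 * K2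
    · exact le_add_right h4
    push_neg at h4
    by_cases hA0 : A n = 0
    · rw [hA0]; exact zero_le
    have hdiv : K2 ≤ A n / 4 := by
      rw [ENNReal.le_div_iff_mul_le (Or.inl (by norm_num)) (Or.inl (by norm_num))]
      calc K2 * 4 = 4 * K2 := mul_comm _ _
      _ ≤ A n := h4.le
    have hroot : K2 ^ (1/2:ℝ) ≤ A n ^ (1/2:ℝ) / 2 := by
      calc K2 ^ (1/2:ℝ) ≤ (A n / 4) ^ (1/2:ℝ) := ENNReal.rpow_le_rpow hdiv (by norm_num)
      _ = A n ^ (1/2:ℝ) / (4:ℝ≥0∞) ^ (1/2:ℝ) := ENNReal.div_rpow_of_nonneg _ _ (by norm_num)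
      _ = A n ^ (1/2:ℝ) / 2 := by
          congr 1
          rw [show (4:ℝ≥0∞) = (2:ℝ≥0∞) ^ (2:ℕ) by norm_num, ← ENNReal.rpow_natCast,
            ← ENNReal.rpow_mul]
          norm_num
    have hhalf : K2 ^ (1/2:ℝ) * A n ^ (1/2:ℝ) ≤ A n / 2 := by
      calc K2 ^ (1/2:ℝ) * A n ^ (1/2:ℝ) ≤ (A n ^ (1/2:ℝ) / 2) * A n ^ (1/2:ℝ) :=
          mul_le_mul_left hroot _
      _ = A n ^ (1/2:ℝ) * A n ^ (1/2:ℝ) / 2 := by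
          simp only [div_eq_mul_inv]
          rw [mul_right_comm]
      _ = A n / 2 := by
          rw [← ENNReal.rpow_add _ _ hA0 (hAfin n)]
          rw [show (1/2 + 1/2 : ℝ) = 1 by norm_num, ENNReal.rpow_one]
    have h5 : A n ≤ A n / 2 + eps n := (hCS n).trans (add_le_add_left hhalf _)
    have hfin2 : A n / 2 ≠ ⊤ := ne_top_of_le_ne_top (hAfin n) ENNReal.half_le_self
    have h6 : A n / 2 ≤ eps n := by
      have h7 : A n / 2 + A n / 2 ≤ A n / 2 + eps n := by
        calc A n / 2 + A n / 2 = A n := ENNReal.add_halves _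
        _ ≤ A n / 2 + eps n := h5
      exact (ENNReal.add_le_add_iff_left hfin2).mp h7
    calc A n = A n / 2 + A n / 2 := (ENNReal.add_halves _).symm
    _ ≤ eps n + eps n := add_le_add h6 h6
    _ = 2 * eps n := (two_mul _).symm
    _ ≤ 4 * K2 + 2 * eps n := le_add_self
  have hAmono : Monotone A := fun m n h => lintegral_mono (hindmono g2 h)
  have hAtotfin : (∫⁻ z, g2 z ∂ν) ≠ ⊤ := by
    rw [hsupA]
    refine ne_top_of_le_ne_top (?_ : (4 * K2 + 2 * K2 : ℝ≥0∞) ≠ ⊤)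
      (iSup_le fun n => (hAbound n).trans (add_le_add_right (mul_le_mul_right (hepsleK2 n) 2) _))
    exact ENNReal.add_ne_top.mpr
      ⟨ENNReal.mul_ne_top (by norm_num) hK, ENNReal.mul_ne_top (by norm_num) hK⟩
  have hfinal : (∫⁻ z, g2 z ∂ν) ≤ K2 ^ (1/2:ℝ) * (∫⁻ z, g2 z ∂ν) ^ (1/2:ℝ) := by
    refine ENNReal.le_of_forall_pos_le_add fun δ hδ _ => ?_
    obtain ⟨n, hn⟩ := hepsex δ (by exact_mod_cast hδ.ne')
    rw [hsupA]
    refine iSup_le fun m => ?_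
    have h2 : eps (max m n) ≤ δ := le_trans (lintegral_mono
      (Set.indicator_le_indicator_of_subset
        (compl_subset_compl.mpr (hEmono (le_max_right m n))) (fun z => zero_le))) hn
    calc A m ≤ A (max m n) := hAmono (le_max_left _ _)
    _ ≤ K2 ^ (1/2:ℝ) * A (max m n) ^ (1/2:ℝ) + eps (max m n) := hCS _
    _ ≤ K2 ^ (1/2:ℝ) * (⨆ k, A k) ^ (1/2:ℝ) + ↑δ :=
        add_le_add (mul_le_mul_right (ENNReal.rpow_le_rpow (le_iSup A _) (by norm_num)) _) h2
  have hAK : (∫⁻ z, g2 z ∂ν) ≤ K2 := by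
    by_cases ha0 : (∫⁻ z, g2 z ∂ν) = 0
    · rw [ha0]; exact zero_le
    have h1 : (∫⁻ z, g2 z ∂ν) ^ (1/2:ℝ) * (∫⁻ z, g2 z ∂ν) ^ (1/2:ℝ)
        ≤ K2 ^ (1/2:ℝ) * (∫⁻ z, g2 z ∂ν) ^ (1/2:ℝ) := by
      rw [← ENNReal.rpow_add _ _ ha0 hAtotfin,
        show (1/2 + 1/2 : ℝ) = 1 by norm_num, ENNReal.rpow_one]
      exact hfinal
    have hne0 : (∫⁻ z, g2 z ∂ν) ^ (1/2:ℝ) ≠ 0 := by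
      intro hc
      rw [ENNReal.rpow_eq_zero_iff] at hc
      rcases hc with ⟨hc1, _⟩ | ⟨_, hc2⟩
      · exact ha0 hc1
      · norm_num at hc2
    have hneT : (∫⁻ z, g2 z ∂ν) ^ (1/2:ℝ) ≠ ⊤ := by
      intro hc
      rw [ENNReal.rpow_eq_top_iff] at hc
      rcases hc with ⟨_, hc2⟩ | ⟨hc1, _⟩
      · norm_num at hc2
      · exact hAtotfin hc1
    have h2 : (∫⁻ z, g2 z ∂ν) ^ (1/2:ℝ) ≤ K2 ^ (1/2:ℝ) :=
      (ENNReal.mul_le_mul_iff_left hne0 hneT).mp h1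
    have h3 := ENNReal.rpow_le_rpow h2 (le_of_lt two_pos)
    rw [← ENNReal.rpow_mul, ← ENNReal.rpow_mul,
      show ((1:ℝ)/2 * 2) = 1 by norm_num, ENNReal.rpow_one, ENNReal.rpow_one] at h3
    exact h3
  -- conclude
  set D' : Set ℂ := {z : ℂ | ρ₀ z ≠ 0} with hD'def
  have hD'sub : D' ⊆ D := fun z hz => by
    by_contra hD
    exact hz (hsupp z hD)
  have hD'meas : MeasurableSet D' := by
    have h := (hρ₀m (measurableSet_singleton (0:ℝ))).compl
    have : D' = (ρ₀ ⁻¹' {0})ᶜ := by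
      rw [hD'def]
      ext z
      simp [Set.mem_preimage]
    rw [this]
    exact h
  have step1 : (∫⁻ z, g2 z) = ∫⁻ z, D'.indicator g2 z := by
    refine lintegral_congr fun z => ?_
    by_cases h : ρ₀ z = 0
    · have hz : z ∉ D' := by simp [hD'def, h]
      rw [Set.indicator_of_notMem hz, hg2def]
      simp [h]
    · rw [Set.indicator_of_mem (by simp [hD'def, h])]
  calc (∫⁻ z, g2 z) = ∫⁻ z, D'.indicator g2 z := step1
  _ = ∫⁻ z in D', g2 z := lintegral_indicator hD'meas _
  _ ≤ ∫⁻ z, g2 z ∂ν := lintegral_mono' (Measure.restrict_mono hD'sub le_rfl) le_rfl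
  _ ≤ K2 := hAK


/-- Beurling's criterion for extremality of an admissible metric. -/
theorem beurling_criterion (D : Set ℂ) (Γ Γ₀ : Set (ℝ → ℂ)) (hΓ₀ : Γ₀ ⊆ Γ)
    (ρ₀ : ℂ → ℝ) (hadm : IsAdmissible Γ ρ₀) (hsupp : ∀ z ∉ D, ρ₀ z = 0)
    (hone : ∀ γ ∈ Γ₀, curveIntegralρ ρ₀ γ = 1)
    (hpos : ∀ h : ℂ → ℝ, Measurable h →
      (∀ γ ∈ Γ₀, 0 ≤ curveIntegralρ h γ) → 0 ≤ ∫ z in D, h z * ρ₀ z) :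
    modulus Γ = ∫⁻ z : ℂ, ENNReal.ofReal (ρ₀ z ^ 2) := by
  refine le_antisymm ?_ ?_
  · simp only [modulus]
    exact iInf₂_le ρ₀ hadm
  · simp only [modulus]
    exact le_iInf₂ fun ρ hρ => beurling_key D Γ Γ₀ hΓ₀ ρ₀ hadm hsupp hone hpos ρ hρ
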